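/- Let (B,j) be a C*-net bundle over a pathwise connected poset K with base point a, and let Π = π₁ᵃ(K) act on B_a via the holonomy action. Then the map T ↦ T_a is a bijection from the set of sections of (B,j) onto the fixed-point algebra of B_a under the Π-action. -/

import Mathlib

/-- A 1-simplex in a poset: a support with two faces below it. -/
structure PosetSimplex (K : Type*) [PartialOrder K] where
  supp : K
  f0 : K
  f1 : K
  h0 : f0 ≤ supp
  h1 : f1 ≤ supp

/-- Paths in a poset: finite composable sequences of 1-simplices (with a trivial path). -/
inductive NetPath (K : Type*) [PartialOrder K] : K → K → Type _
  | nil (a : K) : NetPath K a a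
  | cons {a o : K} (p : NetPath K a o) (b : PosetSimplex K) (h : b.f1 = o) :
      NetPath K a b.f0

namespace NetPath

variable {K : Type*} [PartialOrder K]

/-- Concatenation of paths. -/
def comp : ∀ {a o e : K}, NetPath K a o → NetPath K o e → NetPath K a e
  | _, _, _, p, .nil _ => p
  | _, _, _, p, .cons q b h => .cons (p.comp q) b h

/-- The path consisting of a single 1-simplex, from its 1-face to its 0-face. -/
def single (b : PosetSimplex K) : NetPath K b.f1 b.f0 := .cons (.nil b.f1) b rfl

end NetPath

/-- The opposite of a 1-simplex. -/
def PosetSimplex.op {K : Type*} [PartialOrder K] (b : PosetSimplex K) : PosetSimplex K :=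
  ⟨b.supp, b.f1, b.f0, b.h1, b.h0⟩

/-- The reverse (opposite) of a path. -/
def NetPath.reverse {K : Type*} [PartialOrder K] : ∀ {a o : K}, NetPath K a o → NetPath K o a
  | _, _, .nil a => .nil a
  | a, _, .cons p b h =>
      (NetPath.single ⟨b.supp, b.f1, b.f0, b.h1, b.h0⟩).comp
        ((h.symm ▸ p.reverse : NetPath K b.f1 a))

/-- Homotopy of paths in a poset: the equivalence relation generated by elementary moves
(replacing a 1-simplex by a composable decomposition through simplices with smaller support)
and cancellation of a 1-simplex with its opposite, compatible with concatenation. -/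
inductive PathHomotopic (K : Type*) [PartialOrder K] :
    ∀ {a o : K}, NetPath K a o → NetPath K a o → Prop
  | refl {a o : K} (p : NetPath K a o) : PathHomotopic K p p
  | symm {a o : K} {p q : NetPath K a o} : PathHomotopic K p q → PathHomotopic K q p
  | trans {a o : K} {p q r : NetPath K a o} :
      PathHomotopic K p q → PathHomotopic K q r → PathHomotopic K p r
  | comp {a o e : K} {p p' : NetPath K a o} {q q' : NetPath K o e} :
      PathHomotopic K p p' → PathHomotopic K q q' → PathHomotopic K (p.comp q) (p'.comp q')
  | decomp {s s₁ s₂ x y z : K} (hz : z ≤ s) (hx : x ≤ s)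
      (hy1 : y ≤ s₁) (hx1 : x ≤ s₁) (hz2 : z ≤ s₂) (hy2 : y ≤ s₂)
      (hs1 : s₁ ≤ s) (hs2 : s₂ ≤ s) :
      PathHomotopic K (NetPath.single ⟨s, z, x, hz, hx⟩)
        ((NetPath.single ⟨s₁, y, x, hy1, hx1⟩).comp (NetPath.single ⟨s₂, z, y, hz2, hy2⟩))
  | cancel (b : PosetSimplex K) :
      PathHomotopic K ((NetPath.single b).comp (NetPath.single b.op)) (.nil b.f1)

section Eval

variable {K : Type*} [PartialOrder K] (A : K → Type*)
  [∀ a, Ring (A a)] [∀ a, StarRing (A a)] [∀ a, Algebra ℂ (A a)]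
  (j : ∀ ⦃a a' : K⦄, a ≤ a' → (A a ≃⋆ₐ[ℂ] A a'))

/-- Evaluation of a 1-simplex in a C*-net bundle: `j_b := j_{∂₀b,|b|} ∘ j_{|b|,∂₁b}⁻¹`
read as a *-isomorphism `A_{∂₁b} → A_{∂₀b}`. -/
def simplexEval (b : PosetSimplex K) : A b.f1 ≃⋆ₐ[ℂ] A b.f0 :=
  (j b.h1).trans (j b.h0).symm

/-- Evaluation of a path in a C*-net bundle, composing the simplex evaluations. -/
def pathEval : ∀ {a o : K}, NetPath K a o → (A a ≃⋆ₐ[ℂ] A o)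
  | _, _, .nil _ => StarAlgEquiv.refl ℂ _
  | _, _, .cons p b h => (pathEval p).trans (h ▸ simplexEval A j b)

end Eval

/-- The loop `g_{o'o} = [p_{ao'} * (o';o',o) * p_{oa}]` attached to an inclusion `o ≤ o'`
by a path frame `P`. -/
def frameLoop {K : Type*} [PartialOrder K] {a : K} (P : ∀ o : K, NetPath K a o)
    {o o' : K} (h : o ≤ o') : NetPath K a a :=
  ((P o).comp (NetPath.single ⟨o', o', o, le_refl o', h⟩)).comp (P o').reverse


section Aux

variable {K : Type*} [PartialOrder K] (A : K → Type*)
  [∀ a, Ring (A a)] [∀ a, StarRing (A a)] [∀ a, Algebra ℂ (A a)]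
  (j : ∀ ⦃a a' : K⦄, a ≤ a' → (A a ≃⋆ₐ[ℂ] A a'))

lemma pathEval_nil (x : K) (v : A x) : pathEval A j (.nil x) v = v := by
  simp [pathEval]

lemma pathEval_cons {x : K} {b : PosetSimplex K} (p : NetPath K x b.f1) (v : A x) :
    pathEval A j (.cons p b rfl) v = (j b.h0).symm (j b.h1 (pathEval A j p v)) := by
  simp [pathEval, simplexEval]

lemma pathEval_comp' : ∀ {a o e : K} (p : NetPath K a o) (q : NetPath K o e) (x : A a),
    pathEval A j (p.comp q) x = pathEval A j q (pathEval A j p x) := by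
  intro a o e p q x
  induction q with
  | nil => simp [NetPath.comp, pathEval]
  | cons q b h ih =>
    subst h
    simp only [NetPath.comp, pathEval, StarAlgEquiv.trans_apply, ih]

lemma section_transport (T : ∀ o, A o)
    (hT : ∀ ⦃o o' : K⦄ (h : o ≤ o'), j h (T o) = T o') :
    ∀ {x y : K} (p : NetPath K x y), pathEval A j p (T x) = T y := by
  intro x y p
  induction p with
  | nil => simp [pathEval]
  | cons p b h ih =>
    subst h
    rw [pathEval_cons, ih, hT b.h1, ← hT b.h0, StarAlgEquiv.symm_apply_apply]

lemma pathEval_reverse : ∀ {x y : K} (p : NetPath K x y) (v : A x),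
    pathEval A j p.reverse (pathEval A j p v) = v := by
  intro x y p v
  induction p with
  | nil => simp [NetPath.reverse, pathEval]
  | cons p b h ih =>
    subst h
    simp only [NetPath.reverse]
    rw [pathEval_comp', pathEval_cons]
    have h2 : ∀ w, pathEval A j (NetPath.single (⟨b.supp, b.f1, b.f0, b.h1, b.h0⟩ :
        PosetSimplex K)) w = (j b.h1).symm (j b.h0 w) := by
      intro w
      simp [NetPath.single, pathEval, simplexEval]
    rw [h2]
    simp [ih]

lemma pathEval_reverse' {x y : K} (p : NetPath K x y) (w : A y) :
    pathEval A j p.reverse w = (pathEval A j p).symm w := by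
  have := pathEval_reverse A j p ((pathEval A j p).symm w)
  simpa using this

end Aux

/-- For a C*-net bundle `(B, j)` over a pathwise connected poset `K` with
base point `a`, the evaluation `T ↦ T_a` is a bijection from the set of sections of
`(B, j)` onto the fixed-point algebra of `B_a` under the holonomy action of `π₁ᵃ(K)`:
every section evaluates to a fixed point, and every fixed point extends uniquely to a
section. -/
theorem sections_biject_fixedPoints {K : Type*} [PartialOrder K]
    (hconn : ∀ a o : K, Nonempty (NetPath K a o))
    (B : K → Type*) [∀ a, Ring (B a)] [∀ a, StarRing (B a)] [∀ a, Algebra ℂ (B a)]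
    (j : ∀ ⦃a a' : K⦄, a ≤ a' → (B a ≃⋆ₐ[ℂ] B a'))
    (hj : ∀ ⦃a a' a'' : K⦄ (h : a ≤ a') (h' : a' ≤ a''),
      j (h.trans h') = (j h).trans (j h'))
    (a : K) :
    (∀ T : ∀ o, B o, (∀ ⦃o o' : K⦄ (h : o ≤ o'), j h (T o) = T o') →
      ∀ p : NetPath K a a, pathEval B j p (T a) = T a) ∧
    (∀ t : B a, (∀ p : NetPath K a a, pathEval B j p t = t) →
      ∃! T : {T : ∀ o, B o // ∀ ⦃o o' : K⦄ (h : o ≤ o'), j h (T o) = T o'},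
        T.1 a = t) := by
  have jrfl : ∀ (o : K) (x : B o), j (le_refl o) x = x := by
    intro o x
    have h : j (le_refl o) = (j (le_refl o)).trans (j (le_refl o)) :=
      hj (le_refl o) (le_refl o)
    have h2 : j (le_refl o) x = j (le_refl o) (j (le_refl o) x) := by
      conv_lhs => rw [h]
      rfl
    exact ((j (le_refl o)).injective h2.symm)
  have jrfl_symm : ∀ (o : K) (x : B o), (j (le_refl o)).symm x = x := by
    intro o x
    conv_lhs => rw [← jrfl o x]
    exact (j (le_refl o)).symm_apply_apply x
  constructor
  · intro T hT p
    exact section_transport B j T hT p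
  · intro t ht
    set P : ∀ o : K, NetPath K a o := fun o => (hconn a o).some with hP
    have key : ∀ ⦃o o' : K⦄ (h : o ≤ o'),
        j h (pathEval B j (P o) t) = pathEval B j (P o') t := by
      intro o o' h
      have hl := ht (frameLoop P h)
      unfold frameLoop at hl
      rw [pathEval_comp', pathEval_comp'] at hl
      have hsingle : pathEval B j (NetPath.single (⟨o', o', o, le_refl o', h⟩ :
          PosetSimplex K)) (pathEval B j (P o) t)
          = (j (le_refl o')).symm (j h (pathEval B j (P o) t)) := by
        simp [NetPath.single, pathEval, simplexEval]
      rw [hsingle, jrfl_symm, pathEval_reverse'] at hl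
      have := congrArg (pathEval B j (P o')) hl
      rwa [StarAlgEquiv.apply_symm_apply] at this
    refine ⟨⟨fun o => pathEval B j (P o) t, key⟩, ht (P a), ?_⟩
    intro S hS
    apply Subtype.ext
    funext o
    have := section_transport B j S.1 S.2 (P o)
    rw [hS] at this
    exact this.symm
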